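/- Let C > 0, y ∈ ℝ, θ₀, ω₀, σ₀ ∈ ℝ, and define s(ν) = e^{iθ₀}(ν + σ₀) + iω₀, the pole ν_p = -σ₀ + (y/C)·e^{-iθ₀} - ω₀·e^{i(π/2 - θ₀)}, and the virtual admittance y^v = C·Re(ν_p) = -C·σ₀ + y·cos θ₀ - C·ω₀·sin θ₀. Then: (1) for every ν ∈ ℂ with ν ≠ ν_p, one has C·s(ν) - y = C·e^{iθ₀}(ν - ν_p), so that e^{iθ₀}/(C·s(ν) - y) = 1/(C(ν - ν_p)); (2) for every ν ≠ ν_p with ν ≠ i·Im(ν_p), the loop-transformed value Ĝ(ν)/(1 + y^v·Ĝ(ν)), where Ĝ(ν) = 1/(C(ν - ν_p)), equals 1/(C(ν - i·Im ν_p)); and (3) for every real ω ≠ Im(ν_p), Re(1/(C(iω - i·Im ν_p))) = 0. -/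

import Mathlib

/-- For a CPL `G(s) = 1/(Cs - y)` with `C > 0`, under the mapping
`s(ν) = e^{iθ₀}(ν + σ₀) + iω₀`, the rotated device `e^{iθ₀}G(s(ν))` equals
`1/(C(ν - ν_p))` with pole `ν_p = -σ₀ + (y/C)e^{-iθ₀} - ω₀e^{i(π/2-θ₀)}`; the loop
transformation with virtual admittance `y^v = C·Re ν_p` moves the pole onto the
imaginary axis, and the transformed device has zero real part on the imaginary axis. -/
theorem cpl_loop_transformation (C y θ₀ ω₀ σ₀ : ℝ) (hC : 0 < C) :
    let s : ℂ → ℂ := fun ν => Complex.exp (θ₀ * Complex.I) * (ν + σ₀) + ω₀ * Complex.I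
    let νp : ℂ := -(σ₀ : ℂ) + (y / C : ℝ) * Complex.exp (-θ₀ * Complex.I)
        - (ω₀ : ℝ) * Complex.exp ((Real.pi / 2 - θ₀) * Complex.I)
    let yv : ℝ := -C * σ₀ + y * Real.cos θ₀ - C * ω₀ * Real.sin θ₀
    let Ghat : ℂ → ℂ := fun ν => 1 / (C * (ν - νp))
    yv = C * νp.re ∧
    (∀ ν : ℂ, ν ≠ νp →
      (C * s ν - y = C * Complex.exp (θ₀ * Complex.I) * (ν - νp) ∧
       Complex.exp (θ₀ * Complex.I) / (C * s ν - y) = 1 / (C * (ν - νp)))) ∧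
    (∀ ν : ℂ, ν ≠ νp → ν ≠ Complex.I * νp.im →
      Ghat ν / (1 + yv * Ghat ν) = 1 / (C * (ν - Complex.I * νp.im))) ∧
    (∀ ω : ℝ, ω ≠ νp.im →
      (1 / (C * (Complex.I * ω - Complex.I * νp.im))).re = 0) := by
  intro s νp yv Ghat
  have hCne : C ≠ 0 := hC.ne'
  have hC0 : (C : ℂ) ≠ 0 := by exact_mod_cast hCne
  have hre : νp.re = -σ₀ + (y / C) * Real.cos θ₀ - ω₀ * Real.sin θ₀ := by
    simp [νp, Complex.exp_re, Real.cos_neg, Real.cos_pi_div_two_sub]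
  have hyv : yv = C * νp.re := by
    rw [hre]; simp only [yv]; field_simp
  have heq : ∀ ν : ℂ, C * s ν - y = C * Complex.exp (θ₀ * Complex.I) * (ν - νp) := by
    intro ν
    have h1 : Complex.exp (θ₀ * Complex.I) * Complex.exp (-θ₀ * Complex.I) = 1 := by
      rw [← Complex.exp_add]; ring_nf; exact Complex.exp_zero
    have h2 : Complex.exp (θ₀ * Complex.I) * Complex.exp ((Real.pi / 2 - θ₀) * Complex.I)
        = Complex.I := by
      rw [← Complex.exp_add, show (θ₀:ℂ) * Complex.I + ((Real.pi:ℂ)/2 - θ₀) * Complex.I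
          = (Real.pi/2 : ℝ) * Complex.I by push_cast; ring, Complex.exp_mul_I]
      simp
    have hy : ((y / C : ℝ) : ℂ) = (y:ℂ)/C := by push_cast; ring
    simp only [s, νp, hy]
    generalize Complex.exp (θ₀ * Complex.I) = e at *
    generalize Complex.exp (-θ₀ * Complex.I) = f at *
    generalize Complex.exp ((Real.pi / 2 - θ₀) * Complex.I) = g at *
    field_simp
    linear_combination (y:ℂ)*h1 - (C:ℂ)*ω₀*h2
  refine ⟨hyv, ?_, ?_, ?_⟩
  · intro ν hν
    refine ⟨heq ν, ?_⟩
    rw [heq ν]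
    have hne : ν - νp ≠ 0 := sub_ne_zero.mpr hν
    rw [div_eq_div_iff (mul_ne_zero (mul_ne_zero hC0 (Complex.exp_ne_zero _)) hne)
      (mul_ne_zero hC0 hne)]
    ring
  · intro ν h1 h2
    simp only [Ghat]
    clear_value νp
    have hne1 : ν - νp ≠ 0 := sub_ne_zero.mpr h1
    have hne2 : ν - Complex.I * νp.im ≠ 0 := sub_ne_zero.mpr h2
    have hsplit : (νp : ℂ) = (νp.re : ℂ) + Complex.I * νp.im := by
      apply Complex.ext <;> simp
    have hyv' : (yv : ℂ) = (C : ℂ) * (νp.re : ℂ) := by rw [hyv]; push_cast; ring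
    have hden : 1 + (yv : ℂ) * (1 / (C * (ν - νp))) = (ν - Complex.I * νp.im) / (ν - νp) := by
      rw [hyv']
      field_simp
      linear_combination (-1:ℂ) * hsplit
    rw [hden]
    field_simp
  · intro ω hω
    have hr : (C : ℂ) * (Complex.I * ω - Complex.I * νp.im)
        = ((C * (ω - νp.im) : ℝ) : ℂ) * Complex.I := by push_cast; ring
    have hr0 : C * (ω - νp.im) ≠ 0 := by
      exact mul_ne_zero hCne (sub_ne_zero.mpr hω)
    rw [hr, one_div, Complex.inv_re]
    simp
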